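/- Let θ ∈ (0,1], 0 < κ < ∞, 0 < q ≤ ∞ and b ∈ SV. Then there exists a constant c > 0 such that for every μ-measurable function f on Ω and all 0 ≤ T < S ≤ ∞: ‖u^{−θ−1/q} b(u) K(u,f;L_κ,L_∞)‖_{q,(T,S)} ≥ c ‖v^{(1−θ)/κ−1/q} b(v^{1/κ}) f^*(v)‖_{q,(T^κ,S^κ)}, and likewise ‖u^{−θ−1/q} b(u) K(u,f;L_{κ,∞},L_∞)‖_{q,(T,S)} ≥ c ‖v^{(1−θ)/κ−1/q} b(v^{1/κ}) f^*(v)‖_{q,(T^κ,S^κ)}. -/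

import Mathlib

open MeasureTheory ENNReal Set

noncomputable section

/-- `‖g‖_{q,s}`: the Lebesgue quasi-norm (with values in `[0,∞]`) of an `ℝ≥0∞`-valued
function `g` over the set `s ⊆ ℝ`, for `0 < q ≤ ∞`; `q = ∞` gives the essential supremum. -/
def nrm (q : ℝ≥0∞) (g : ℝ → ℝ≥0∞) (s : Set ℝ) : ℝ≥0∞ :=
  if q = ∞ then essSup g (volume.restrict s)
  else (∫⁻ t in s, g t ^ q.toReal) ^ (1 / q.toReal)

/-- The interval `(T, S)` with a possibly infinite right endpoint `S`. -/
def IooE (T : ℝ) (S : ℝ≥0∞) : Set ℝ := {t : ℝ | T < t ∧ ENNReal.ofReal t < S}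

/-- Two (positive) functions are equivalent on `s`: each is bounded by a positive
constant multiple of the other. -/
def EquivOn (f g : ℝ → ℝ) (s : Set ℝ) : Prop :=
  ∃ c C : ℝ, 0 < c ∧ ∀ x ∈ s, c * g x ≤ f x ∧ f x ≤ C * g x

/-- Slowly varying functions on `(0,∞)`: `b` is measurable and positive on `(0,∞)`, and for
every `ε > 0` the function `t ↦ t^ε b(t)` is equivalent to a non-decreasing function on
`(0,∞)` while `t ↦ t^(-ε) b(t)` is equivalent to a non-increasing one. -/
def IsSV (b : ℝ → ℝ) : Prop :=
  Measurable b ∧ (∀ x ∈ Ioi (0:ℝ), 0 < b x) ∧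
  ∀ ε : ℝ, 0 < ε →
    (∃ g : ℝ → ℝ, MonotoneOn g (Ioi 0) ∧ EquivOn (fun t => t ^ ε * b t) g (Ioi 0)) ∧
    (∃ g : ℝ → ℝ, AntitoneOn g (Ioi 0) ∧ EquivOn (fun t => t ^ (-ε) * b t) g (Ioi 0))

/-- A measure is non-atomic: every set of positive measure has a measurable subset of
strictly smaller positive measure. -/
def Nonatomic {Ω : Type*} [MeasurableSpace Ω] (μ : Measure Ω) : Prop :=
  ∀ s : Set Ω, MeasurableSet s → 0 < μ s →
    ∃ t : Set Ω, MeasurableSet t ∧ t ⊆ s ∧ 0 < μ t ∧ μ t < μ s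

variable {Ω : Type*} [MeasurableSpace Ω]

/-- The non-increasing rearrangement `f^*` (with values in `[0,∞]`). -/
def rearr (μ : Measure Ω) (f : Ω → ℝ) (t : ℝ) : ℝ≥0∞ :=
  sInf {s : ℝ≥0∞ | μ {x | s < (‖f x‖₊ : ℝ≥0∞)} ≤ ENNReal.ofReal t}

/-- The maximal function `f^{**}(t) = t⁻¹ ∫_0^t f^*`. -/
def dstar (μ : Measure Ω) (f : Ω → ℝ) (t : ℝ) : ℝ≥0∞ :=
  (ENNReal.ofReal t)⁻¹ * ∫⁻ τ in Ioo 0 t, rearr μ f τ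

/-- `f^{**}_{(κ)}(t) = t⁻¹ (∫_0^{t^κ} (f^*)^κ)^{1/κ}`. -/
def dstarK (κ : ℝ) (μ : Measure Ω) (f : Ω → ℝ) (t : ℝ) : ℝ≥0∞ :=
  (ENNReal.ofReal t)⁻¹ * (∫⁻ τ in Ioo 0 (t ^ κ), rearr μ f τ ^ κ) ^ (1 / κ)

/-- The `L_κ` quasi-norm `(∫_Ω |g|^κ dμ)^{1/κ}`. -/
def normLp (κ : ℝ) (μ : Measure Ω) (g : Ω → ℝ) : ℝ≥0∞ :=
  (∫⁻ x, ((‖g x‖₊ : ℝ≥0∞)) ^ κ ∂μ) ^ (1 / κ)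

/-- The `L_∞` norm `ess sup |g|`. -/
def normLinf (μ : Measure Ω) (g : Ω → ℝ) : ℝ≥0∞ :=
  essSup (fun x => ((‖g x‖₊ : ℝ≥0∞))) μ

/-- The weak `L_κ` quasi-norm `sup_{t>0} t^{1/κ} g^*(t)`. -/
def normLw (κ : ℝ) (μ : Measure Ω) (g : Ω → ℝ) : ℝ≥0∞ :=
  ⨆ (t : ℝ) (_ : 0 < t), ENNReal.ofReal t ^ (1 / κ) * rearr μ g t

/-- The Peetre K-functional for the couple with quasi-norms `N0`, `N1`; equals `∞` if
there is no decomposition with both quasi-norms finite. -/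
def Kf (t : ℝ) (f : Ω → ℝ) (N0 N1 : (Ω → ℝ) → ℝ≥0∞) : ℝ≥0∞ :=
  ⨅ (g : Ω → ℝ) (h : Ω → ℝ) (_ : f = g + h), N0 g + ENNReal.ofReal t * N1 h

/-- `K(t, f; L_κ, L_∞)`. -/
def KLp (κ : ℝ) (μ : Measure Ω) (t : ℝ) (f : Ω → ℝ) : ℝ≥0∞ :=
  Kf t f (normLp κ μ) (normLinf μ)

/-- `K(t, f; L_{κ,∞}, L_∞)`. -/
def KLw (κ : ℝ) (μ : Measure Ω) (t : ℝ) (f : Ω → ℝ) : ℝ≥0∞ :=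
  Kf t f (normLw κ μ) (normLinf μ)

section AuxLemmas

variable {Ω : Type*} [MeasurableSpace Ω] {μ : Measure Ω}

lemma rearr_antitone (μ : Measure Ω) (f : Ω → ℝ) : Antitone (rearr μ f) :=
  fun _ _ hst => sInf_le_sInf fun _ ha => le_trans ha (ENNReal.ofReal_le_ofReal hst)

lemma measure_normLinf_lt (μ : Measure Ω) (h : Ω → ℝ) :
    μ {x | normLinf μ h < (‖h x‖₊ : ℝ≥0∞)} = 0 := by
  have hae := ENNReal.ae_le_essSup (μ := μ) (fun x => (‖h x‖₊ : ℝ≥0∞))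
  rw [ae_iff] at hae
  simpa only [not_le, normLinf] using hae

lemma rearr_add_le (f g h : Ω → ℝ) (hfgh : f = g + h) (t : ℝ) :
    rearr μ f t ≤ rearr μ g t + normLinf μ h := by
  set M := normLinf μ h with hM
  have key : ∀ s ∈ {s : ℝ≥0∞ | μ {x | s < (‖g x‖₊ : ℝ≥0∞)} ≤ ENNReal.ofReal t},
      rearr μ f t ≤ s + M := by
    intro s hs
    apply sInf_le
    show μ {x | s + M < (‖f x‖₊ : ℝ≥0∞)} ≤ ENNReal.ofReal t
    have hsub : {x | s + M < (‖f x‖₊ : ℝ≥0∞)} ⊆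
        {x | s < (‖g x‖₊ : ℝ≥0∞)} ∪ {x | M < (‖h x‖₊ : ℝ≥0∞)} := by
      intro x hx
      by_contra hc
      rw [Set.mem_union] at hc
      push_neg at hc
      obtain ⟨h1, h2⟩ := hc
      rw [Set.mem_setOf_eq, not_lt] at h1 h2
      have hfx : f x = g x + h x := by rw [hfgh]; rfl
      have h3 : (‖f x‖₊ : ℝ≥0∞) ≤ (‖g x‖₊ : ℝ≥0∞) + (‖h x‖₊ : ℝ≥0∞) := by
        rw [hfx]
        exact_mod_cast nnnorm_add_le (g x) (h x)
      have : (‖f x‖₊ : ℝ≥0∞) ≤ s + M := h3.trans (add_le_add h1 h2)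
      exact absurd hx (not_lt.mpr this)
    calc μ {x | s + M < (‖f x‖₊ : ℝ≥0∞)}
        ≤ μ ({x | s < (‖g x‖₊ : ℝ≥0∞)} ∪ {x | M < (‖h x‖₊ : ℝ≥0∞)}) := measure_mono hsub
      _ ≤ μ {x | s < (‖g x‖₊ : ℝ≥0∞)} + μ {x | M < (‖h x‖₊ : ℝ≥0∞)} := measure_union_le _ _
      _ = μ {x | s < (‖g x‖₊ : ℝ≥0∞)} := by rw [measure_normLinf_lt, add_zero]
      _ ≤ ENNReal.ofReal t := hs
  have h1 : rearr μ f t - M ≤ rearr μ g t :=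
    le_sInf fun s hs => tsub_le_iff_right.mpr (key s hs)
  calc rearr μ f t ≤ rearr μ f t - M + M := le_tsub_add
    _ ≤ rearr μ g t + M := add_le_add_left h1 M

lemma cheb {φ : Ω → ℝ≥0∞} (hφ : Measurable φ) {κ : ℝ} (hκ : 0 < κ) {c r : ℝ≥0∞}
    (hc : c ≠ ∞) (h : ∀ s, s < r → c ≤ μ {x | s < φ x}) :
    c * r ^ κ ≤ ∫⁻ x, φ x ^ κ ∂μ := by
  set I := ∫⁻ x, φ x ^ κ ∂μ with hI
  have hφκ : Measurable fun x => φ x ^ κ := hφ.pow measurable_const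
  have step : ∀ s, s < r → c * s ^ κ ≤ I := by
    intro s hs
    calc c * s ^ κ ≤ μ {x | s < φ x} * s ^ κ := mul_le_mul_left (h s hs) _
      _ = s ^ κ * μ {x | s < φ x} := mul_comm _ _
      _ ≤ s ^ κ * μ {x | s ^ κ ≤ φ x ^ κ} := by
          exact mul_le_mul_right (measure_mono fun x hx =>
            ENNReal.rpow_le_rpow (le_of_lt hx) hκ.le) _
      _ ≤ I := mul_meas_ge_le_lintegral₀ hφκ.aemeasurable _
  rcases eq_or_ne r 0 with rfl | hr0
  · simp [ENNReal.zero_rpow_of_pos hκ]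
  rcases eq_or_ne c 0 with rfl | hc0
  · simp
  rcases eq_or_ne r ∞ with rfl | hrtop
  · by_contra hcon
    push_neg at hcon
    have hIlt : I < ∞ := hcon.trans_le le_top
    set s : ℝ≥0∞ := ((I + 1) / c) ^ (1/κ) with hs
    have hslt : s < ∞ := by
      have hd : (I + 1) / c < ∞ :=
        ENNReal.div_lt_top (by simp [hIlt.ne]) hc0
      exact ENNReal.rpow_lt_top_of_nonneg (by positivity) hd.ne
    have hle := step s hslt
    rw [hs, ← ENNReal.rpow_mul, one_div, inv_mul_cancel₀ hκ.ne', ENNReal.rpow_one,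
      ENNReal.mul_div_cancel hc0 hc] at hle
    exact absurd hle (not_le.mpr (ENNReal.lt_add_right hIlt.ne one_ne_zero))
  · apply ENNReal.le_of_forall_lt_one_mul_le
    intro a ha
    rcases eq_or_ne a 0 with rfl | ha0
    · simp
    have h1 : a ^ (1/κ) < 1 := ENNReal.rpow_lt_one ha (by positivity)
    have hs : a ^ (1/κ) * r < r := by
      calc a ^ (1/κ) * r < 1 * r := by
            exact (ENNReal.mul_lt_mul_iff_left hr0 hrtop).mpr h1
        _ = r := one_mul r
    have hle := step _ hs
    calc a * (c * r ^ κ) = c * ((a ^ (1/κ) * r) ^ κ) := by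
          rw [ENNReal.mul_rpow_of_nonneg _ _ hκ.le, ← ENNReal.rpow_mul, one_div,
            inv_mul_cancel₀ hκ.ne', ENNReal.rpow_one]
          ring
      _ ≤ I := hle

end AuxLemmas
section AuxLemmas2

variable {Ω : Type*} [MeasurableSpace Ω] {μ : Measure Ω}

lemma decomp_bound_w {κ u : ℝ} (hκ : 0 < κ) (hu : 0 < u) (f g h : Ω → ℝ)
    (hfgh : f = g + h) :
    ENNReal.ofReal u * rearr μ f (u ^ κ) ≤ normLw κ μ g + ENNReal.ofReal u * normLinf μ h := by
  have h1 := rearr_add_le (μ := μ) f g h hfgh (u ^ κ)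
  have h2 : ENNReal.ofReal u * rearr μ g (u ^ κ) ≤ normLw κ μ g := by
    have h3 := le_iSup₂ (f := fun (t : ℝ) (_ : 0 < t) =>
      ENNReal.ofReal t ^ (1/κ) * rearr μ g t) (u ^ κ) (Real.rpow_pos_of_pos hu κ)
    have h4 : ENNReal.ofReal (u ^ κ) ^ (1/κ) = ENNReal.ofReal u := by
      rw [← ENNReal.ofReal_rpow_of_pos hu, ← ENNReal.rpow_mul, mul_one_div_cancel hκ.ne',
        ENNReal.rpow_one]
    rw [h4] at h3
    exact h3
  calc ENNReal.ofReal u * rearr μ f (u ^ κ)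
      ≤ ENNReal.ofReal u * (rearr μ g (u ^ κ) + normLinf μ h) := mul_le_mul_right h1 _
    _ = ENNReal.ofReal u * rearr μ g (u ^ κ) + ENNReal.ofReal u * normLinf μ h := mul_add _ _ _
    _ ≤ normLw κ μ g + ENNReal.ofReal u * normLinf μ h := add_le_add_left h2 _

lemma decomp_bound_p {κ u : ℝ} (hκ : 0 < κ) (hu : 0 < u) (f g h : Ω → ℝ)
    (hf : Measurable f) (hfgh : f = g + h) :
    ENNReal.ofReal u * rearr μ f (u ^ κ) ≤ normLp κ μ g + ENNReal.ofReal u * normLinf μ h := by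
  set M := normLinf μ h with hM
  set r := rearr μ f (u ^ κ) with hr
  set φ : Ω → ℝ≥0∞ := fun x => (‖f x‖₊ : ℝ≥0∞) - M with hφdef
  have hφm : Measurable φ := (hf.nnnorm.coe_nnreal_ennreal).sub measurable_const
  have hcheb : ENNReal.ofReal (u ^ κ) * (r - M) ^ κ ≤ ∫⁻ x, φ x ^ κ ∂μ := by
    apply cheb hφm hκ ENNReal.ofReal_ne_top
    intro s hs
    have h1 : s + M < r := lt_tsub_iff_right.mp hs
    have h2 : ¬ μ {x | s + M < (‖f x‖₊ : ℝ≥0∞)} ≤ ENNReal.ofReal (u ^ κ) := by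
      intro hc
      exact absurd (sInf_le hc : r ≤ s + M) (not_le.mpr h1)
    have hsub : {x | s + M < (‖f x‖₊ : ℝ≥0∞)} ⊆ {x | s < φ x} := by
      intro x hx
      show s < (‖f x‖₊ : ℝ≥0∞) - M
      exact lt_tsub_iff_right.mpr hx
    exact le_trans (le_of_lt (not_le.mp h2)) (measure_mono hsub)
  have hphig : ∫⁻ x, φ x ^ κ ∂μ ≤ ∫⁻ x, ((‖g x‖₊ : ℝ≥0∞)) ^ κ ∂μ := by
    apply lintegral_mono_ae
    filter_upwards [ENNReal.ae_le_essSup (μ := μ) (fun x => ((‖h x‖₊ : ℝ≥0∞)))] with x hx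
    apply ENNReal.rpow_le_rpow _ hκ.le
    apply tsub_le_iff_right.mpr
    have hfx : f x = g x + h x := by rw [hfgh]; rfl
    have h3 : (‖f x‖₊ : ℝ≥0∞) ≤ (‖g x‖₊ : ℝ≥0∞) + (‖h x‖₊ : ℝ≥0∞) := by
      rw [hfx]
      exact_mod_cast nnnorm_add_le (g x) (h x)
    exact h3.trans (add_le_add_right hx _)
  have key : ENNReal.ofReal u * (r - M) ≤ normLp κ μ g := by
    have h3 : (ENNReal.ofReal u * (r - M)) ^ κ ≤ ∫⁻ x, ((‖g x‖₊ : ℝ≥0∞)) ^ κ ∂μ := by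
      rw [ENNReal.mul_rpow_of_nonneg _ _ hκ.le, ENNReal.ofReal_rpow_of_pos hu]
      exact hcheb.trans hphig
    calc ENNReal.ofReal u * (r - M)
        = ((ENNReal.ofReal u * (r - M)) ^ κ) ^ (1/κ) := by
          rw [← ENNReal.rpow_mul, mul_one_div_cancel hκ.ne', ENNReal.rpow_one]
      _ ≤ normLp κ μ g := ENNReal.rpow_le_rpow h3 (by positivity)
  calc ENNReal.ofReal u * r ≤ ENNReal.ofReal u * ((r - M) + M) := mul_le_mul_right le_tsub_add _
    _ = ENNReal.ofReal u * (r - M) + ENNReal.ofReal u * M := mul_add _ _ _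
    _ ≤ normLp κ μ g + ENNReal.ofReal u * M := add_le_add_left key _

lemma key_KLp {κ u : ℝ} (hκ : 0 < κ) (hu : 0 < u) (f : Ω → ℝ) (hf : Measurable f) :
    ENNReal.ofReal u * rearr μ f (u ^ κ) ≤ KLp κ μ u f :=
  le_iInf fun g => le_iInf fun h => le_iInf fun hfgh => decomp_bound_p hκ hu f g h hf hfgh

lemma key_KLw {κ u : ℝ} (hκ : 0 < κ) (hu : 0 < u) (f : Ω → ℝ) :
    ENNReal.ofReal u * rearr μ f (u ^ κ) ≤ KLw κ μ u f :=
  le_iInf fun g => le_iInf fun h => le_iInf fun hfgh => decomp_bound_w hκ hu f g h hfgh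

end AuxLemmas2
section AuxLemmas3

lemma lintegral_image_1d {s : Set ℝ} {f f' : ℝ → ℝ} (hs : MeasurableSet s)
    (hf' : ∀ x ∈ s, HasDerivWithinAt f (f' x) s x) (hf : InjOn f s) (g : ℝ → ℝ≥0∞) :
    ∫⁻ x in f '' s, g x = ∫⁻ x in s, ENNReal.ofReal |f' x| * g (f x) := by
  simpa only [ContinuousLinearMap.det_toSpanSingleton] using
    lintegral_image_eq_lintegral_abs_det_fderiv_mul volume hs
      (fun x hx => (hf' x hx).hasFDerivWithinAt) hf g

lemma restrict_image_ac {s : Set ℝ} {f f' : ℝ → ℝ} (hs : MeasurableSet s)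
    (hf' : ∀ x ∈ s, HasDerivWithinAt f (f' x) s x) (hf : InjOn f s) (hfm : Measurable f) :
    volume.restrict (f '' s) ≪ Measure.map f (volume.restrict s) := by
  refine Measure.AbsolutelyContinuous.mk fun N hN h0 => ?_
  rw [Measure.map_apply hfm hN] at h0
  rw [Measure.restrict_apply hN]
  have h1 : ∀ᵐ x ∂(volume.restrict s), x ∉ f ⁻¹' N := measure_eq_zero_iff_ae_notMem.mp h0
  have h2 : ∫⁻ x in s, ENNReal.ofReal |f' x| * N.indicator 1 (f x) = 0 := by
    rw [← lintegral_zero (μ := volume.restrict s)]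
    apply lintegral_congr_ae
    filter_upwards [h1] with x hx
    have hfx : f x ∉ N := hx
    rw [Set.indicator_of_notMem hfx, mul_zero]
  calc volume (N ∩ f '' s) = (volume.restrict (f '' s)) N := (Measure.restrict_apply hN).symm
    _ = ∫⁻ x in f '' s, N.indicator 1 x := (lintegral_indicator_one hN).symm
    _ = ∫⁻ x in s, ENNReal.ofReal |f' x| * N.indicator 1 (f x) :=
        lintegral_image_1d hs hf' hf (N.indicator 1)
    _ = 0 := h2

lemma measurableSet_IooE (T : ℝ) (S : ℝ≥0∞) : MeasurableSet (IooE T S) := by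
  have h : IooE T S = Ioi T ∩ ENNReal.ofReal ⁻¹' (Iio S) := rfl
  rw [h]
  exact measurableSet_Ioi.inter (ENNReal.measurable_ofReal measurableSet_Iio)

lemma IooE_subset_Ioi {T : ℝ} (hT : 0 ≤ T) (S : ℝ≥0∞) : IooE T S ⊆ Ioi 0 :=
  fun t ht => lt_of_le_of_lt hT ht.1

lemma image_IooE {T : ℝ} (hT : 0 ≤ T) (S : ℝ≥0∞) {κ : ℝ} (hκ : 0 < κ) :
    (fun u : ℝ => u ^ κ) '' (IooE T S) = IooE (T ^ κ) (S ^ κ) := by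
  ext v
  constructor
  · rintro ⟨u, ⟨h1, h2⟩, rfl⟩
    have hu : 0 < u := lt_of_le_of_lt hT h1
    refine ⟨Real.rpow_lt_rpow hT h1 hκ, ?_⟩
    rw [← ENNReal.ofReal_rpow_of_pos hu]
    exact ENNReal.rpow_lt_rpow h2 hκ
  · rintro ⟨h1, h2⟩
    have hv : 0 < v := lt_of_le_of_lt (Real.rpow_nonneg hT κ) h1
    have hvu : (v ^ (1/κ)) ^ κ = v := by
      rw [← Real.rpow_mul hv.le, one_div, inv_mul_cancel₀ hκ.ne', Real.rpow_one]
    refine ⟨v ^ (1/κ), ⟨?_, ?_⟩, hvu⟩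
    · by_contra hc
      push_neg at hc
      have h3 := Real.rpow_le_rpow (Real.rpow_nonneg hv.le _) hc hκ.le
      rw [hvu] at h3
      exact absurd h1 (not_lt.mpr h3)
    · by_contra hc
      push_neg at hc
      have h3 := ENNReal.rpow_le_rpow hc hκ.le
      rw [ENNReal.ofReal_rpow_of_pos (Real.rpow_pos_of_pos hv _), hvu] at h3
      exact absurd h2 (not_lt.mpr h3)

end AuxLemmas3
lemma main_aux {Ω : Type*} [MeasurableSpace Ω] (μ : Measure Ω)
    (θ κ : ℝ) (hκ : 0 < κ) (q : ℝ≥0∞) (hq : 0 < q)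
    (b : ℝ → ℝ) (hbm : Measurable b) (hbp : ∀ x ∈ Ioi (0:ℝ), 0 < b x)
    (f : Ω → ℝ) (T : ℝ) (S : ℝ≥0∞) (hT : 0 ≤ T)
    (Kfun : ℝ → ℝ≥0∞)
    (hK : ∀ u : ℝ, 0 < u → ENNReal.ofReal u * rearr μ f (u ^ κ) ≤ Kfun u) :
    ENNReal.ofReal ((κ ^ (1 / q.toReal))⁻¹) *
      nrm q (fun v => ENNReal.ofReal (v ^ ((1 - θ) / κ - 1 / q.toReal) * b (v ^ (1 / κ))) *
        rearr μ f v) (IooE (T ^ κ) (S ^ κ)) ≤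
      nrm q (fun u => ENNReal.ofReal (u ^ (-θ - 1 / q.toReal) * b u) * Kfun u) (IooE T S) := by
  set e : ℝ → ℝ := fun u => u ^ κ with he
  set A := IooE T S with hA
  have hAm : MeasurableSet A := measurableSet_IooE T S
  have hApos : ∀ u ∈ A, (0:ℝ) < u := fun u hu => IooE_subset_Ioi hT S hu
  have himg : e '' A = IooE (T ^ κ) (S ^ κ) := image_IooE hT S hκ
  have hderiv : ∀ u ∈ A, HasDerivWithinAt e (κ * u ^ (κ - 1)) A u := fun u hu =>
    (Real.hasDerivAt_rpow_const (Or.inl (hApos u hu).ne')).hasDerivWithinAt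
  have hinj : InjOn e A := by
    intro x hx y hy hxy
    rcases lt_trichotomy x y with hlt | heq | hlt
    · exact absurd hxy (ne_of_lt (Real.rpow_lt_rpow (hApos x hx).le hlt hκ))
    · exact heq
    · exact absurd hxy.symm (ne_of_lt (Real.rpow_lt_rpow (hApos y hy).le hlt hκ))
  set Wv : ℝ → ℝ≥0∞ := fun v =>
    ENNReal.ofReal (v ^ ((1 - θ) / κ - 1 / q.toReal) * b (v ^ (1 / κ))) * rearr μ f v with hWv
  set ψ : ℝ → ℝ≥0∞ := fun u => ENNReal.ofReal (u ^ (-θ - 1 / q.toReal) * b u) * Kfun u with hψ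
  by_cases hqtop : q = ∞
  · -- q = ∞ : essential supremum case
    have hzero : 1 / q.toReal = 0 := by simp [hqtop]
    have hc1 : ((κ : ℝ) ^ (1 / q.toReal))⁻¹ = 1 := by rw [hzero, Real.rpow_zero, inv_one]
    rw [hc1, ENNReal.ofReal_one, one_mul]
    simp only [nrm, if_pos hqtop]
    have hWm : Measurable Wv := by
      apply Measurable.mul
      · apply Measurable.ennreal_ofReal
        exact (by fun_prop : Measurable fun v : ℝ => v ^ ((1 - θ) / κ - 1 / q.toReal)).mul
          (hbm.comp (by fun_prop))
      · exact (rearr_antitone μ f).measurable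
    have hem : Measurable e := by fun_prop
    have hptwise : ∀ u ∈ A, Wv (e u) ≤ ψ u := by
      intro u hu
      have hu0 : 0 < u := hApos u hu
      have h1 : (u ^ κ) ^ (1/κ) = u := by
        rw [← Real.rpow_mul hu0.le, mul_one_div_cancel hκ.ne', Real.rpow_one]
      have h2 : (u ^ κ) ^ ((1 - θ) / κ - 1 / q.toReal) = u ^ (-θ - 1 / q.toReal) * u := by
        rw [hzero, sub_zero, sub_zero, ← Real.rpow_mul hu0.le, mul_comm κ,
          div_mul_cancel₀ _ hκ.ne', show (1:ℝ) - θ = -θ + 1 by ring,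
          Real.rpow_add_one hu0.ne']
      show ENNReal.ofReal ((u ^ κ) ^ ((1 - θ) / κ - 1 / q.toReal) * b ((u ^ κ) ^ (1/κ))) *
        rearr μ f (u ^ κ) ≤ ψ u
      rw [h1, h2]
      calc ENNReal.ofReal (u ^ (-θ - 1 / q.toReal) * u * b u) * rearr μ f (u ^ κ)
          = ENNReal.ofReal (u ^ (-θ - 1 / q.toReal) * b u) *
              (ENNReal.ofReal u * rearr μ f (u ^ κ)) := by
            rw [show u ^ (-θ - 1/q.toReal) * u * b u = (u ^ (-θ - 1/q.toReal) * b u) * u by ring,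
              ENNReal.ofReal_mul (mul_nonneg (Real.rpow_nonneg hu0.le _) (hbp u hu0).le),
              mul_assoc]
        _ ≤ ENNReal.ofReal (u ^ (-θ - 1 / q.toReal) * b u) * Kfun u :=
            mul_le_mul_right (hK u hu0) _
    calc essSup Wv (volume.restrict (IooE (T ^ κ) (S ^ κ)))
        = essSup Wv (volume.restrict (e '' A)) := by rw [himg]
      _ ≤ essSup Wv (Measure.map e (volume.restrict A)) :=
          essSup_mono_measure (restrict_image_ac hAm hderiv hinj hem)
      _ = essSup (Wv ∘ e) (volume.restrict A) :=
          essSup_map_measure hWm.aemeasurable hem.aemeasurable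
      _ ≤ essSup ψ (volume.restrict A) := by
          refine essSup_mono_ae ?_
          filter_upwards [ae_restrict_mem hAm] with u hu
          exact hptwise u hu
  · -- q finite
    have hqr : 0 < q.toReal := ENNReal.toReal_pos hq.ne' hqtop
    simp only [nrm, if_neg hqtop]
    have hptwise : ∀ u ∈ A,
        ENNReal.ofReal |κ * u ^ (κ - 1)| * Wv (e u) ^ q.toReal ≤
          ENNReal.ofReal κ * ψ u ^ q.toReal := by
      intro u hu
      have hu0 : 0 < u := hApos u hu
      have hbu : 0 < b u := hbp u hu0
      have habs : |κ * u ^ (κ - 1)| = κ * u ^ (κ - 1) := abs_of_pos (by positivity)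
      have h1 : (u ^ κ) ^ (1/κ) = u := by
        rw [← Real.rpow_mul hu0.le, mul_one_div_cancel hκ.ne', Real.rpow_one]
      have h2 : (u ^ κ) ^ ((1 - θ) / κ - 1 / q.toReal) =
          u ^ (κ * ((1 - θ) / κ - 1 / q.toReal)) := by
        rw [← Real.rpow_mul hu0.le]
      have hreal : κ * u ^ (κ - 1) *
            (u ^ (κ * ((1 - θ) / κ - 1 / q.toReal)) * b u) ^ q.toReal
          = κ * ((u ^ (-θ - 1 / q.toReal + 1) * b u) ^ q.toReal) := by
        rw [Real.mul_rpow (Real.rpow_nonneg hu0.le _) hbu.le,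
          Real.mul_rpow (Real.rpow_nonneg hu0.le _) hbu.le,
          ← Real.rpow_mul hu0.le, ← Real.rpow_mul hu0.le]
        have hexp : κ - 1 + κ * ((1 - θ) / κ - 1 / q.toReal) * q.toReal
            = (-θ - 1 / q.toReal + 1) * q.toReal := by
          field_simp
          ring
        calc κ * u ^ (κ - 1) * (u ^ (κ * ((1 - θ) / κ - 1 / q.toReal) * q.toReal) * b u ^ q.toReal)
            = κ * (u ^ (κ - 1) * u ^ (κ * ((1 - θ) / κ - 1 / q.toReal) * q.toReal)
                * b u ^ q.toReal) := by ring
          _ = κ * (u ^ (κ - 1 + κ * ((1 - θ) / κ - 1 / q.toReal) * q.toReal) * b u ^ q.toReal) := by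
              rw [← Real.rpow_add hu0]
          _ = κ * (u ^ ((-θ - 1 / q.toReal + 1) * q.toReal) * b u ^ q.toReal) := by rw [hexp]
      show ENNReal.ofReal |κ * u ^ (κ - 1)| *
          (ENNReal.ofReal ((u ^ κ) ^ ((1 - θ) / κ - 1 / q.toReal) * b ((u ^ κ) ^ (1/κ))) *
            rearr μ f (u ^ κ)) ^ q.toReal ≤
          ENNReal.ofReal κ * (ENNReal.ofReal (u ^ (-θ - 1 / q.toReal) * b u) * Kfun u) ^ q.toReal
      rw [habs, h1, h2]
      set F := rearr μ f (u ^ κ) with hF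
      calc ENNReal.ofReal (κ * u ^ (κ - 1)) *
            (ENNReal.ofReal (u ^ (κ * ((1 - θ) / κ - 1 / q.toReal)) * b u) * F) ^ q.toReal
          = ENNReal.ofReal (κ * u ^ (κ - 1) *
              (u ^ (κ * ((1 - θ) / κ - 1 / q.toReal)) * b u) ^ q.toReal) * F ^ q.toReal := by
            rw [ENNReal.mul_rpow_of_nonneg _ _ hqr.le,
              ENNReal.ofReal_rpow_of_pos (mul_pos (Real.rpow_pos_of_pos hu0 _) hbu),
              ← mul_assoc, ← ENNReal.ofReal_mul (by positivity)]
        _ = ENNReal.ofReal (κ * ((u ^ (-θ - 1 / q.toReal + 1) * b u) ^ q.toReal)) * F ^ q.toReal := by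
            rw [hreal]
        _ = ENNReal.ofReal κ *
            (ENNReal.ofReal (u ^ (-θ - 1 / q.toReal) * b u) * ENNReal.ofReal u) ^ q.toReal
              * F ^ q.toReal := by
            rw [ENNReal.ofReal_mul hκ.le,
              ← ENNReal.ofReal_mul (mul_nonneg (Real.rpow_nonneg hu0.le _) hbu.le),
              show u ^ (-θ - 1/q.toReal) * b u * u = u ^ (-θ - 1/q.toReal + 1) * b u by
                rw [Real.rpow_add_one hu0.ne']; ring,
              ENNReal.ofReal_rpow_of_pos (mul_pos (Real.rpow_pos_of_pos hu0 _) hbu), mul_assoc]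
        _ = ENNReal.ofReal κ *
            (ENNReal.ofReal (u ^ (-θ - 1 / q.toReal) * b u) * (ENNReal.ofReal u * F)) ^ q.toReal := by
            rw [ENNReal.mul_rpow_of_nonneg _ _ hqr.le, ENNReal.mul_rpow_of_nonneg _ _ hqr.le,
              ENNReal.mul_rpow_of_nonneg _ _ hqr.le]
            ring
        _ ≤ ENNReal.ofReal κ *
            (ENNReal.ofReal (u ^ (-θ - 1 / q.toReal) * b u) * Kfun u) ^ q.toReal :=
            mul_le_mul_right (ENNReal.rpow_le_rpow (mul_le_mul_right (hK u hu0) _) hqr.le) _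
    have hchain : ∫⁻ v in IooE (T ^ κ) (S ^ κ), Wv v ^ q.toReal ≤
        ENNReal.ofReal κ * ∫⁻ u in A, ψ u ^ q.toReal := by
      rw [← himg, lintegral_image_1d hAm hderiv hinj (fun v => Wv v ^ q.toReal),
        ← lintegral_const_mul' _ _ ENNReal.ofReal_ne_top]
      apply lintegral_mono_ae
      filter_upwards [ae_restrict_mem hAm] with u hu
      exact hptwise u hu
    have hfin : (∫⁻ v in IooE (T ^ κ) (S ^ κ), Wv v ^ q.toReal) ^ (1 / q.toReal) ≤
        (ENNReal.ofReal κ) ^ (1 / q.toReal) * (∫⁻ u in A, ψ u ^ q.toReal) ^ (1 / q.toReal) := by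
      rw [← ENNReal.mul_rpow_of_nonneg _ _ (by positivity)]
      exact ENNReal.rpow_le_rpow hchain (by positivity)
    calc ENNReal.ofReal ((κ ^ (1 / q.toReal))⁻¹) *
          (∫⁻ v in IooE (T ^ κ) (S ^ κ), Wv v ^ q.toReal) ^ (1 / q.toReal)
        ≤ ENNReal.ofReal ((κ ^ (1 / q.toReal))⁻¹) *
            ((ENNReal.ofReal κ) ^ (1 / q.toReal) *
              (∫⁻ u in A, ψ u ^ q.toReal) ^ (1 / q.toReal)) := mul_le_mul_right hfin _
      _ = (∫⁻ u in A, ψ u ^ q.toReal) ^ (1 / q.toReal) := by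
          rw [← mul_assoc, ENNReal.ofReal_rpow_of_pos hκ,
            ← ENNReal.ofReal_mul (by positivity),
            inv_mul_cancel₀ (ne_of_gt (by positivity : (0:ℝ) < κ ^ (1 / q.toReal))),
            ENNReal.ofReal_one, one_mul]
theorem statement5 {Ω : Type*} [MeasurableSpace Ω] (μ : Measure Ω) [SigmaFinite μ]
    (hμ : Nonatomic μ) (θ κ : ℝ) (hθ0 : 0 < θ) (hθ1 : θ ≤ 1) (hκ : 0 < κ)
    (q : ℝ≥0∞) (hq : 0 < q) (b : ℝ → ℝ) (hb : IsSV b) :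
    ∃ c : ℝ, 0 < c ∧
      ∀ f : Ω → ℝ, Measurable f →
        ∀ (T : ℝ) (S : ℝ≥0∞), 0 ≤ T → ENNReal.ofReal T < S →
          (ENNReal.ofReal c *
              (nrm q (fun v => ENNReal.ofReal (v ^ ((1 - θ) / κ - 1 / q.toReal) * b (v ^ (1 / κ))) *
              rearr μ f v) (IooE (T ^ κ) (S ^ κ))) ≤
            nrm q (fun u => ENNReal.ofReal (u ^ (-θ - 1 / q.toReal) * b u) * KLp κ μ u f) (IooE T S)) ∧
          (ENNReal.ofReal c *
              (nrm q (fun v => ENNReal.ofReal (v ^ ((1 - θ) / κ - 1 / q.toReal) * b (v ^ (1 / κ))) *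
              rearr μ f v) (IooE (T ^ κ) (S ^ κ))) ≤
            nrm q (fun u => ENNReal.ofReal (u ^ (-θ - 1 / q.toReal) * b u) * KLw κ μ u f) (IooE T S)) := by
  refine ⟨(κ ^ (1 / q.toReal))⁻¹, by positivity, ?_⟩
  intro f hf T S hT hTS
  constructor
  · exact main_aux μ θ κ hκ q hq b hb.1 hb.2.1 f T S hT (fun u => KLp κ μ u f)
      (fun u hu => key_KLp hκ hu f hf)
  · exact main_aux μ θ κ hκ q hq b hb.1 hb.2.1 f T S hT (fun u => KLw κ μ u f)
      (fun u hu => key_KLw hκ hu f)
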